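/- Let G be a graph derived from a Burling tree in which two vertices u and v lie on a common root-to-leaf path of the tree (u is an ancestor of v). Then in the graph C(T), obtained from the fully derived graph G(T) by making the vertex set of every principal branch a clique, the closed neighborhoods satisfy N[v] ⊆ N[u]. -/

import Mathlib

/-- A Burling tree: a finite rooted tree (encoded by a parent function) together with a
last-born function `lastBorn` choosing a child of every non-leaf, and a choose function
`choose` associating to every non-last-born non-root vertex `v` the vertex set of a
(possibly empty) branch (descending path) starting at the last-born of the parent of
`v`, and `∅` to the root and to last-born vertices. -/
structure BurlingTree (V : Type*) where
  root : V
  parent : V → V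
  parent_root : parent root = root
  parent_eq_self : ∀ v : V, parent v = v → v = root
  reaches_root : ∀ v : V, ∃ m : ℕ, parent^[m] v = root
  lastBorn : V → V
  lastBorn_spec : ∀ x : V, (∃ u : V, u ≠ x ∧ parent u = x) →
    lastBorn x ≠ x ∧ parent (lastBorn x) = x
  choose : V → Set V
  choose_empty : ∀ v : V, (v = root ∨ v = lastBorn (parent v)) → choose v = ∅
  choose_branch : ∀ v : V, v ≠ root → v ≠ lastBorn (parent v) →
    ∃ L : List V, (L = [] ∨ L.head? = some (lastBorn (parent v))) ∧
      List.Chain' (fun a b => parent b = a) L ∧ choose v = {w | w ∈ L}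

namespace BurlingTree

variable {V : Type*} (T : BurlingTree V)

/-- `u` is an ancestor of `v`: `u` lies on the path from `v` to the root. -/
def Ancestor (u v : V) : Prop := ∃ m : ℕ, T.parent^[m] v = u

/-- Adjacency in `C(T)`, the graph obtained from the fully derived graph `G(T)` of a
Burling tree by making the vertex set of every principal branch (root-to-leaf path) a
clique: distinct `u, v` are adjacent iff one is chosen by the other or one is an
ancestor of the other. -/
def CAdj (u v : V) : Prop :=
  u ≠ v ∧ (v ∈ T.choose u ∨ u ∈ T.choose v ∨ T.Ancestor u v ∨ T.Ancestor v u)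

end BurlingTree

/-- In a list chained by `parent b = a`, every element has the head as an iterated
parent, and all intermediate iterates remain in the list. -/
lemma chain_iterate_head {V : Type*} (p : V → V) :
    ∀ (L : List V), List.Chain' (fun a b => p b = a) L → ∀ h0, L.head? = some h0 →
      ∀ x ∈ L, ∃ j, p^[j] x = h0 ∧ ∀ i ≤ j, p^[i] x ∈ L := by
  intro L
  induction L with
  | nil => intro _ _ h; simp at h
  | cons a rest ih =>
    intro hc h0 hh x hx
    simp only [List.head?_cons, Option.some_inj] at hh
    subst hh
    rcases List.mem_cons.mp hx with rfl | hx
    · exact ⟨0, rfl, fun i hi => by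
        interval_cases i
        exact List.mem_cons_self⟩
    · match rest, hx with
      | b :: t, hx =>
        have hc' := List.isChain_cons_cons.mp hc
        obtain ⟨j, hj, hall⟩ := ih hc'.2 b rfl x hx
        refine ⟨j + 1, ?_, ?_⟩
        · rw [Function.iterate_succ_apply', hj, hc'.1]
        · intro i hi
          rcases Nat.lt_or_ge i (j + 1) with hlt | hge
          · exact List.mem_cons_of_mem _ (hall i (Nat.lt_succ_iff.mp hlt))
          · have : i = j + 1 := le_antisymm hi hge
            subst this
            rw [Function.iterate_succ_apply', hj, hc'.1]
            exact List.mem_cons_self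

/-- If `u` is an ancestor of `v` in a Burling tree `T` (so `u` and `v` lie on a common
root-to-leaf path), then in the graph `C(T)` the closed neighborhoods satisfy
`N[v] ⊆ N[u]`. -/
theorem burling_closed_nbhd_subset {V : Type*} (T : BurlingTree V) (u v : V)
    (h : T.Ancestor u v) :
    ∀ w : V, (w = v ∨ T.CAdj v w) → (w = u ∨ T.CAdj u w) := by
  obtain ⟨m, hm⟩ := h
  intro w hw
  by_cases hwu : w = u
  · exact Or.inl hwu
  by_cases huv : u = v
  · subst huv
    rcases hw with rfl | hcv
    · exact Or.inl rfl
    · exact Or.inr hcv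
  have hm1 : m ≠ 0 := by
    intro h0; subst h0; exact huv hm.symm
  refine Or.inr ⟨fun e => hwu e.symm, ?_⟩
  rcases hw with rfl | ⟨hne, hcase⟩
  · -- w = v : u is adjacent to v since it is a strict ancestor
    exact Or.inr (Or.inr (Or.inl ⟨m, hm⟩))
  rcases hcase with h1 | h2 | h3 | h4
  · -- w ∈ choose v
    have hvcond : ¬(v = T.root ∨ v = T.lastBorn (T.parent v)) := by
      intro hc
      rw [T.choose_empty v hc] at h1
      exact h1
    push_neg at hvcond
    obtain ⟨L, hhead, hchain, hset⟩ := T.choose_branch v hvcond.1 hvcond.2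
    rw [hset] at h1
    have hh : L.head? = some (T.lastBorn (T.parent v)) := by
      rcases hhead with rfl | hh
      · simp at h1
      · exact hh
    obtain ⟨j, hj, -⟩ := chain_iterate_head T.parent L hchain _ hh w h1
    have hv_ne : v ≠ T.parent v := fun e => hvcond.1 (T.parent_eq_self v e.symm)
    have hlb : T.parent (T.lastBorn (T.parent v)) = T.parent v :=
      (T.lastBorn_spec (T.parent v) ⟨v, hv_ne, rfl⟩).2
    obtain ⟨m', rfl⟩ := Nat.exists_eq_succ_of_ne_zero hm1
    refine Or.inr (Or.inr (Or.inl ⟨m' + (j + 1), ?_⟩))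
    have hjw : T.parent^[j + 1] w = T.parent v := by
      rw [Function.iterate_succ_apply', hj, hlb]
    rw [Function.iterate_add_apply, hjw, ← Function.iterate_succ_apply]
    exact hm
  · -- v ∈ choose w
    have hwcond : ¬(w = T.root ∨ w = T.lastBorn (T.parent w)) := by
      intro hc
      rw [T.choose_empty w hc] at h2
      exact h2
    push_neg at hwcond
    obtain ⟨L, hhead, hchain, hset⟩ := T.choose_branch w hwcond.1 hwcond.2
    rw [hset] at h2
    have hh : L.head? = some (T.lastBorn (T.parent w)) := by
      rcases hhead with rfl | hh
      · simp at h2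
      · exact hh
    obtain ⟨j, hj, hall⟩ := chain_iterate_head T.parent L hchain _ hh v h2
    rcases le_or_gt m j with hle | hlt
    · -- u itself lies in the branch chosen by w
      refine Or.inr (Or.inl ?_)
      rw [hset]
      have := hall m hle
      rwa [hm] at this
    · -- u is an ancestor of w
      have hw_ne : w ≠ T.parent w := fun e => hwcond.1 (T.parent_eq_self w e.symm)
      have hlb : T.parent (T.lastBorn (T.parent w)) = T.parent w :=
        (T.lastBorn_spec (T.parent w) ⟨w, hw_ne, rfl⟩).2
      refine Or.inr (Or.inr (Or.inl ⟨m - (j + 1) + 1, ?_⟩))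
      have hjv : T.parent^[j + 1] v = T.parent w := by
        rw [Function.iterate_succ_apply', hj, hlb]
      have hmsplit : m - (j + 1) + (j + 1) = m := Nat.sub_add_cancel hlt
      calc T.parent^[m - (j + 1) + 1] w
          = T.parent^[m - (j + 1)] (T.parent w) := Function.iterate_succ_apply ..
        _ = T.parent^[m - (j + 1)] (T.parent^[j + 1] v) := by rw [hjv]
        _ = T.parent^[m - (j + 1) + (j + 1)] v := (Function.iterate_add_apply ..).symm
        _ = u := by rw [hmsplit, hm]
  · -- v is an ancestor of w
    obtain ⟨k, hk⟩ := h3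
    refine Or.inr (Or.inr (Or.inl ⟨m + k, ?_⟩))
    rw [Function.iterate_add_apply, hk, hm]
  · -- w is an ancestor of v
    obtain ⟨k, hk⟩ := h4
    rcases le_or_gt m k with hle | hlt
    · refine Or.inr (Or.inr (Or.inr ⟨k - m, ?_⟩))
      rw [← hm, ← Function.iterate_add_apply, Nat.sub_add_cancel hle, hk]
    · refine Or.inr (Or.inr (Or.inl ⟨m - k, ?_⟩))
      rw [← hk, ← Function.iterate_add_apply, Nat.sub_add_cancel hlt.le, hm]
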